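/- Let n ∈ ℝ³ with ‖n‖ = 1, let x_f ∈ ℝ³, and let P = { x ∈ ℝ³ : ⟨x − x_f, n⟩ = 0 } be the plane through x_f with normal n. Let μ be a nonzero finite measure on ℝ³ supported in P, absolutely continuous with respect to the 2-dimensional Hausdorff measure restricted to P, and with barycenter x_f (i.e. ∫ (x − x_f) dμ = 0). Let t ∈ ℝ³ with ⟨t, n⟩ = 0, let a, c₁ ∈ ℝ, and let ℓ : ℝ³ → ℝ be a linear map with ℓ(n) = 0. Define ψ(x) = t + a (n × (x − x_f)) + (c₁ + ℓ(x − x_f)) n. Fix any x_E ∈ ℝ³. If ∫ ψ(x) · (γ + δ × (x − x_E)) dμ(x) = 0 for all γ, δ ∈ ℝ³, then t = 0, a = 0, c₁ = 0 and ℓ = 0; in particular ψ vanishes identically. -/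

import Mathlib

open Matrix MeasureTheory
open scoped ENNReal NNReal

lemma line_null (c v : Fin 3 → ℝ) :
    (μH[2] : Measure (Fin 3 → ℝ)) {x | ∃ s : ℝ, x = c + s • v} = 0 := by
  have hf : LipschitzWith ‖v‖₊ (fun s : ℝ => c + s • v) := by
    apply LipschitzWith.of_dist_le_mul
    intro s s'
    simp only [dist_eq_norm, add_sub_add_left_eq_sub, ← sub_smul, norm_smul, Real.norm_eq_abs]
    rw [mul_comm]
    simp [Real.dist_eq]
  have h1 : (μH[2] : Measure ℝ) Set.univ = 0 := by
    have : dimH (Set.univ : Set ℝ) < ((2:ℝ≥0) : ℝ≥0∞) := by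
      rw [Real.dimH_univ]; norm_num
    simpa using hausdorffMeasure_of_dimH_lt this
  have h2 : {x : Fin 3 → ℝ | ∃ s : ℝ, x = c + s • v} = (fun s : ℝ => c + s • v) '' Set.univ := by
    ext x; simp [eq_comm]
  have h3 := hf.hausdorffMeasure_image_le (by norm_num : (0:ℝ) ≤ 2) Set.univ
  rw [h1, mul_zero] at h3
  rw [h2]
  exact le_antisymm h3 (zero_le)

lemma cs3 (p y : Fin 3 → ℝ) : (p ⬝ᵥ y)^2 ≤ (p ⬝ᵥ p) * (y ⬝ᵥ y) := by
  simp only [dotProduct, Fin.sum_univ_three]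
  nlinarith [sq_nonneg (p 0 * y 1 - p 1 * y 0), sq_nonneg (p 0 * y 2 - p 2 * y 0),
    sq_nonneg (p 1 * y 2 - p 2 * y 1)]

/-- dot-product-with-`p` as a continuous linear map. -/
noncomputable def dotCLM (p : Fin 3 → ℝ) : (Fin 3 → ℝ) →L[ℝ] ℝ :=
  LinearMap.toContinuousLinearMap
    { toFun := fun z => z ⬝ᵥ p
      map_add' := fun u v => add_dotProduct u v p
      map_smul' := fun r u => smul_dotProduct r u p }

@[simp] lemma dotCLM_apply (p z : Fin 3 → ℝ) : dotCLM p z = z ⬝ᵥ p := rfl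

lemma ident1 (n y : Fin 3 → ℝ) (a b : ℝ) (hn : n ⬝ᵥ n = 1) (hy : y ⬝ᵥ n = 0) :
    (a • crossProduct n y + b • n) ⬝ᵥ (crossProduct n y) = a * (y ⬝ᵥ y) := by
  simp only [dotProduct, Fin.sum_univ_three, cross_apply, Pi.add_apply, Pi.smul_apply,
    smul_eq_mul, Matrix.cons_val_zero, Matrix.cons_val_one, Matrix.head_cons,
    Matrix.cons_val_two, Matrix.tail_cons] at hn hy ⊢
  linear_combination (a * (y 0 * y 0 + y 1 * y 1 + y 2 * y 2)) * hn
    - (a * (n 0 * y 0 + n 1 * y 1 + n 2 * y 2)) * hy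

lemma ident2 (n w y : Fin 3 → ℝ) (hn : n ⬝ᵥ n = 1) (hy : y ⬝ᵥ n = 0) :
    ((y ⬝ᵥ w) • n) ⬝ᵥ (crossProduct (crossProduct w n) y) = (y ⬝ᵥ w)^2 := by
  simp only [dotProduct, Fin.sum_univ_three, cross_apply, Pi.smul_apply,
    smul_eq_mul, Matrix.cons_val_zero, Matrix.cons_val_one, Matrix.head_cons,
    Matrix.cons_val_two, Matrix.tail_cons] at hn hy ⊢
  linear_combination ((y 0 * w 0 + y 1 * w 1 + y 2 * w 2)^2) * hn
    - ((y 0 * w 0 + y 1 * w 1 + y 2 * w 2) * (w 0 * n 0 + w 1 * n 1 + w 2 * n 2)) * hy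

lemma para (n w y : Fin 3 → ℝ) (hn : n ⬝ᵥ n = 1) (hwn : w ⬝ᵥ n = 0) (hw : w ≠ 0)
    (hy : y ⬝ᵥ n = 0) (hyw : y ⬝ᵥ w = 0) : ∃ s : ℝ, y = s • crossProduct n w := by
  set v := crossProduct n w with hv
  have hy' := hy; have hyw' := hyw
  simp only [dotProduct, Fin.sum_univ_three] at hy' hyw'
  have hvc : v = ![n 1 * w 2 - n 2 * w 1, n 2 * w 0 - n 0 * w 2, n 0 * w 1 - n 1 * w 0] := by
    rw [hv, cross_apply]
  have hv0 : v 0 = n 1 * w 2 - n 2 * w 1 := by rw [hvc]; rfl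
  have hv1 : v 1 = n 2 * w 0 - n 0 * w 2 := by rw [hvc]; rfl
  have hv2 : v 2 = n 0 * w 1 - n 1 * w 0 := by rw [hvc]; rfl
  have c0 : y 1 * v 2 - y 2 * v 1 = 0 := by
    rw [hv1, hv2]; linear_combination (n 0) * hyw' - (w 0) * hy'
  have c1 : y 2 * v 0 - y 0 * v 2 = 0 := by
    rw [hv0, hv2]; linear_combination (n 1) * hyw' - (w 1) * hy'
  have c2 : y 0 * v 1 - y 1 * v 0 = 0 := by
    rw [hv0, hv1]; linear_combination (n 2) * hyw' - (w 2) * hy'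
  have hvv : v ⬝ᵥ v = w ⬝ᵥ w := by
    simp only [dotProduct, Fin.sum_univ_three] at hn hwn ⊢
    rw [hv0, hv1, hv2]
    linear_combination (w 0 * w 0 + w 1 * w 1 + w 2 * w 2) * hn
      - (n 0 * w 0 + n 1 * w 1 + n 2 * w 2) * hwn
  have hww0 : w ⬝ᵥ w ≠ 0 := fun h => hw (dotProduct_self_eq_zero.mp h)
  have k : ∀ i : Fin 3, (w ⬝ᵥ w) * y i = (y ⬝ᵥ v) * v i := by
    have k0 : (w ⬝ᵥ w) * y 0 = (y ⬝ᵥ v) * v 0 := by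
      rw [← hvv]; simp only [dotProduct, Fin.sum_univ_three]
      linear_combination (v 1) * c2 - (v 2) * c1
    have k1 : (w ⬝ᵥ w) * y 1 = (y ⬝ᵥ v) * v 1 := by
      rw [← hvv]; simp only [dotProduct, Fin.sum_univ_three]
      linear_combination (v 2) * c0 - (v 0) * c2
    have k2 : (w ⬝ᵥ w) * y 2 = (y ⬝ᵥ v) * v 2 := by
      rw [← hvv]; simp only [dotProduct, Fin.sum_univ_three]
      linear_combination (v 0) * c1 - (v 1) * c0
    intro i; fin_cases i
    · exact k0
    · exact k1
    · exact k2
  refine ⟨(y ⬝ᵥ v) / (w ⬝ᵥ w), ?_⟩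
  funext i
  rw [Pi.smul_apply, smul_eq_mul, div_mul_eq_mul_div, eq_div_iff hww0]
  linear_combination k i

/-- Single-face content of the unisolvence Lemma 4.1.  Let `n` be a unit vector, `P`
the plane through `x_f` with normal `n`, and `μ` a nonzero finite measure supported in
`P`, absolutely continuous with respect to `μH[2]` restricted to `P`, with barycenter
`x_f`.  Let `ψ(x) = t + a (n × (x − x_f)) + (c₁ + ℓ(x − x_f)) n` with `t ⊥ n` and
`ℓ` linear with `ℓ(n) = 0`.  If `∫ ψ(x) · (γ + δ × (x − x_E)) dμ = 0` for all
`γ, δ ∈ ℝ³`, then `t = 0`, `a = 0`, `c₁ = 0`, `ℓ = 0`, and `ψ` vanishes identically. -/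
theorem stmt9 (n xf xE : Fin 3 → ℝ) (hn : n ⬝ᵥ n = 1)
    (P : Set (Fin 3 → ℝ)) (hP : P = {x : Fin 3 → ℝ | (x - xf) ⬝ᵥ n = 0})
    (μ : Measure (Fin 3 → ℝ)) [IsFiniteMeasure μ] (hμ0 : μ ≠ 0)
    (hsupp : μ Pᶜ = 0)
    (hac : μ ≪ (μH[2] : Measure (Fin 3 → ℝ)).restrict P)
    (hint1 : Integrable (fun x : Fin 3 → ℝ => x) μ)
    (hint2 : Integrable (fun x : Fin 3 → ℝ => x ⬝ᵥ x) μ)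
    (hbary : (∫ x, (x - xf) ∂μ) = 0)
    (t : Fin 3 → ℝ) (ht : t ⬝ᵥ n = 0) (a c₁ : ℝ)
    (ℓ : (Fin 3 → ℝ) →ₗ[ℝ] ℝ) (hℓn : ℓ n = 0)
    (ψ : (Fin 3 → ℝ) → Fin 3 → ℝ)
    (hψ : ∀ x, ψ x = t + a • crossProduct n (x - xf) + (c₁ + ℓ (x - xf)) • n)
    (h0 : ∀ γ δ : Fin 3 → ℝ, ∫ x, (ψ x) ⬝ᵥ (γ + crossProduct δ (x - xE)) ∂μ = 0) :
    t = 0 ∧ a = 0 ∧ c₁ = 0 ∧ ℓ = 0 ∧ ∀ x, ψ x = 0 := by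
  have hMr : (0:ℝ) < (μ Set.univ).toReal :=
    ENNReal.toReal_pos (Measure.measure_univ_ne_zero.mpr hμ0) (measure_ne_top μ _)
  have hy_int : Integrable (fun x : Fin 3 → ℝ => x - xf) μ := hint1.sub (integrable_const xf)
  -- if μ-a.e. points lie on a line through xf, contradiction
  have hnull : ∀ (v : Fin 3 → ℝ) (S : Set (Fin 3 → ℝ)),
      (S ⊆ {x | ∃ s : ℝ, x = xf + s • v}) → μ Sᶜ = 0 → False := by
    intro v S hS hSc
    have hL : μ {x | ∃ s : ℝ, x = xf + s • v} = 0 := by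
      apply hac
      exact le_antisymm (le_trans (Measure.restrict_apply_le _ _) (line_null xf v).le) (zero_le)
    have hS0 : μ S = 0 := measure_mono_null hS hL
    have : μ Set.univ = 0 := by
      have := measure_union_le (μ := μ) S Sᶜ
      rw [Set.union_compl_self, hS0, hSc] at this
      simpa using this
    exact hμ0 (Measure.measure_univ_eq_zero.mp this)
  -- Step 1
  have key1 : ∀ γ : Fin 3 → ℝ, (μ Set.univ).toReal * (t ⬝ᵥ γ + c₁ * (n ⬝ᵥ γ)) = 0 := by
    intro γ
    have h0' := h0 γ 0
    have hz : ∀ x : Fin 3 → ℝ, γ + crossProduct 0 (x - xE) = γ := by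
      intro x; simp
    simp_rw [hz] at h0'
    set L : (Fin 3 → ℝ) →L[ℝ] ℝ :=
      (a • ((dotCLM γ).comp (LinearMap.toContinuousLinearMap (crossProduct n)))
        + (n ⬝ᵥ γ) • LinearMap.toContinuousLinearMap ℓ) with hL
    have hfeq : ∀ x, ψ x ⬝ᵥ γ = (t ⬝ᵥ γ + c₁ * (n ⬝ᵥ γ)) + L (x - xf) := by
      intro x
      simp only [hψ x, hL, ContinuousLinearMap.add_apply, ContinuousLinearMap.smul_apply,
        ContinuousLinearMap.comp_apply, LinearMap.coe_toContinuousLinearMap', dotCLM_apply,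
        add_dotProduct, smul_dotProduct, smul_eq_mul]
      ring
    have hLint : Integrable (fun x => L (x - xf)) μ := L.integrable_comp hy_int
    have hcalc : ∫ x, ψ x ⬝ᵥ γ ∂μ
        = (μ Set.univ).toReal * (t ⬝ᵥ γ + c₁ * (n ⬝ᵥ γ)) + L (∫ x, (x - xf) ∂μ) := by
      simp_rw [hfeq]
      rw [integral_add (integrable_const _) hLint, integral_const,
        L.integral_comp_comm hy_int, smul_eq_mul]
      rfl
    rw [h0', hbary, map_zero, add_zero] at hcalc
    linarith
  have hc₁ : c₁ = 0 := by
    have h := key1 n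
    rw [ht, hn, zero_add, mul_one] at h
    exact (mul_eq_zero.mp h).resolve_left hMr.ne'
  have ht0 : t = 0 := by
    have h := key1 t
    rw [hc₁, dotProduct_comm n t, ht, mul_zero, add_zero] at h
    exact dotProduct_self_eq_zero.mp ((mul_eq_zero.mp h).resolve_left hMr.ne')
  -- Step 2 preliminaries
  have hψ' : ∀ x, ψ x = a • crossProduct n (x - xf) + (ℓ (x - xf)) • n := by
    intro x; rw [hψ x, ht0, hc₁]; simp
  have key2 : ∀ δ : Fin 3 → ℝ, ∫ x, ψ x ⬝ᵥ (crossProduct δ (x - xf)) ∂μ = 0 := by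
    intro δ
    have e : ∀ x : Fin 3 → ℝ,
        crossProduct δ (xE - xf) + crossProduct δ (x - xE) = crossProduct δ (x - xf) := by
      intro x; rw [← map_add]; congr 1; abel
    have := h0 (crossProduct δ (xE - xf)) δ
    simp_rw [e] at this
    exact this
  have hg0int : Integrable (fun x : Fin 3 → ℝ => (x - xf) ⬝ᵥ (x - xf)) μ := by
    have hlin : Integrable (fun x : Fin 3 → ℝ => x ⬝ᵥ xf) μ := by
      simpa using (dotCLM xf).integrable_comp hint1
    have heq : (fun x : Fin 3 → ℝ => (x - xf) ⬝ᵥ (x - xf))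
        = fun x => x ⬝ᵥ x - 2 * (x ⬝ᵥ xf) + xf ⬝ᵥ xf := by
      funext x; simp [dotProduct, Fin.sum_univ_three]; ring
    rw [heq]
    exact (hint2.sub (hlin.const_mul 2)).add (integrable_const _)
  -- a = 0
  have ha : a = 0 := by
    by_contra haa
    have e1 : ∫ x, ψ x ⬝ᵥ (crossProduct n (x - xf)) ∂μ
        = a * ∫ x, (x - xf) ⬝ᵥ (x - xf) ∂μ := by
      rw [← integral_const_mul]
      apply integral_congr_ae
      rw [Filter.EventuallyEq, ae_iff]
      apply measure_mono_null _ hsupp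
      intro x hx
      simp only [Set.mem_setOf_eq] at hx
      simp only [Set.mem_compl_iff, hP, Set.mem_setOf_eq]
      intro hxP
      apply hx
      rw [hψ' x]
      exact ident1 n (x - xf) a (ℓ (x - xf)) hn hxP
    rw [key2 n] at e1
    have hI2z : ∫ x, (x - xf) ⬝ᵥ (x - xf) ∂μ = 0 :=
      (mul_eq_zero.mp e1.symm).resolve_left haa
    have hae := (integral_eq_zero_iff_of_nonneg (fun x => by
      have : (0:ℝ) ≤ (x - xf) ⬝ᵥ (x - xf) := by
        simp only [dotProduct, Fin.sum_univ_three, Pi.sub_apply]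
        nlinarith [sq_nonneg (x 0 - xf 0), sq_nonneg (x 1 - xf 1), sq_nonneg (x 2 - xf 2)]
      exact this) hg0int).mp hI2z
    refine hnull n {x | (x - xf) ⬝ᵥ (x - xf) = 0} ?_ ?_
    · intro x hx
      refine ⟨0, ?_⟩
      have : x - xf = 0 := dotProduct_self_eq_zero.mp hx
      simp only [zero_smul, add_zero]
      rw [sub_eq_zero] at this
      exact this
    · rw [Filter.EventuallyEq, ae_iff] at hae
      apply measure_mono_null _ hae
      intro x hx
      exact hx
  -- ℓ = 0
  set w : Fin 3 → ℝ := fun i => ℓ (Pi.single i 1) with hwdef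
  have hw : ∀ z, ℓ z = z ⬝ᵥ w := by
    intro z
    have hz : z = z 0 • (Pi.single (0 : Fin 3) (1:ℝ) : Fin 3 → ℝ) + z 1 • (Pi.single (1 : Fin 3) (1:ℝ) : Fin 3 → ℝ) + z 2 • (Pi.single (2 : Fin 3) (1:ℝ) : Fin 3 → ℝ) := by
      funext i
      fin_cases i <;> simp [Pi.single_apply]
    calc ℓ z = ℓ (z 0 • (Pi.single (0 : Fin 3) (1:ℝ) : Fin 3 → ℝ) + z 1 • (Pi.single (1 : Fin 3) (1:ℝ) : Fin 3 → ℝ) + z 2 • (Pi.single (2 : Fin 3) (1:ℝ) : Fin 3 → ℝ)) := by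
          rw [← hz]
      _ = z 0 * w 0 + z 1 * w 1 + z 2 * w 2 := by
          simp [map_add, _root_.map_smul, hwdef]
      _ = z ⬝ᵥ w := by simp [dotProduct, Fin.sum_univ_three]
  have hwn : w ⬝ᵥ n = 0 := by rw [dotProduct_comm, ← hw n]; exact hℓn
  have hw0 : w = 0 := by
    by_contra hww
    have e2 : ∫ x, ψ x ⬝ᵥ (crossProduct (crossProduct w n) (x - xf)) ∂μ
        = ∫ x, ((x - xf) ⬝ᵥ w)^2 ∂μ := by
      apply integral_congr_ae
      rw [Filter.EventuallyEq, ae_iff]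
      apply measure_mono_null _ hsupp
      intro x hx
      simp only [Set.mem_setOf_eq] at hx
      simp only [Set.mem_compl_iff, hP, Set.mem_setOf_eq]
      intro hxP
      apply hx
      rw [hψ' x, ha, hw (x - xf)]
      simp only [zero_smul, zero_add]
      exact ident2 n w (x - xf) hn hxP
    rw [key2 _] at e2
    have hcont : Continuous fun x : Fin 3 → ℝ => ((x - xf) ⬝ᵥ w)^2 := by
      have h1 : Continuous fun x : Fin 3 → ℝ => dotCLM w (x - xf) :=
        (dotCLM w).continuous.comp (continuous_id.sub continuous_const)
      exact h1.pow 2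
    have hsqint : Integrable (fun x : Fin 3 → ℝ => ((x - xf) ⬝ᵥ w)^2) μ := by
      apply Integrable.mono (hg0int.const_mul (w ⬝ᵥ w)) hcont.aestronglyMeasurable
      filter_upwards with x
      rw [Real.norm_eq_abs, abs_of_nonneg (sq_nonneg _), Real.norm_eq_abs]
      have h1 := cs3 w (x - xf)
      rw [dotProduct_comm w (x - xf)] at h1
      exact h1.trans (le_abs_self _)
    have hz := (integral_eq_zero_iff_of_nonneg (fun x => sq_nonneg _) hsqint).mp e2.symm
    refine hnull (crossProduct n w) (P ∩ {x | (x - xf) ⬝ᵥ w = 0}) ?_ ?_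
    · rintro x ⟨hx1, hx2⟩
      have hxP : (x - xf) ⬝ᵥ n = 0 := by rw [hP] at hx1; exact hx1
      obtain ⟨s, hs⟩ := para n w (x - xf) hn hwn hww hxP hx2
      exact ⟨s, by rw [← hs]; abel⟩
    · rw [Set.compl_inter]
      apply measure_union_null hsupp
      rw [Filter.EventuallyEq, ae_iff] at hz
      simp only [Pi.zero_apply] at hz
      apply measure_mono_null _ hz
      intro x hx
      simp only [Set.mem_compl_iff, Set.mem_setOf_eq] at hx ⊢
      intro hcontra
      exact hx (by rw [pow_eq_zero_iff (two_ne_zero)] at hcontra; exact hcontra)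
  have hℓ0 : ℓ = 0 := by
    apply LinearMap.ext
    intro z
    rw [hw z, hw0]
    simp
  refine ⟨ht0, ha, hc₁, hℓ0, fun x => ?_⟩
  rw [hψ x, ht0, hc₁, ha]
  simp [hℓ0]
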